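/- Let M, K ≥ 1, h_1,…,h_K ∈ ℂ^M, γ̄_k > 0, σ_k > 0, and η_m > 1 for m ∈ {1,…,M}. Suppose V_1,…,V_K, Q are M×M Hermitian positive semidefinite matrices satisfying the primal constraints: a_k := (1/γ̄_k) h_k† V_k h_k − Σ_{j≠k} h_k† V_j h_k − h_k† Q h_k − σ_k² ≥ 0 for every k, and B_m := η_m · blockDiag(0, Q^{(m:M,m:M)}) − (Σ_k V_k^{(m,m)} + Q^{(m,m)}) E_m ⪰ 0 for every m. Suppose β_1,…,β_K ≥ 0 and Λ_1,…,Λ_M are M×M Hermitian positive semidefinite matrices satisfying the dual constraints: C_k − (β_k/γ̄_k) h_k h_k† ⪰ 0 for every k, where C_k = I_M + Σ_{j≠k} β_j h_j h_j† + Σ_m Λ_m^{(m,m)} E_m, and D ⪰ 0, where D = I_M + Σ_k β_k h_k h_k† + Σ_m Λ_m^{(m,m)} E_m − Σ_m η_m · blockDiag(0, Λ_m^{(m:M,m:M)}). Then Σ_k tr(V_k) + tr(Q) ≥ Σ_k β_k σ_k². -/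

import Mathlib

open Matrix
open scoped ComplexOrder

/-- `blockDiag(0, Q^{(m:M,m:M)})`: the `M × M` matrix whose trailing principal block (rows and
columns with index `≥ m`) equals the corresponding block of `Q`, and which is zero elsewhere. -/
def trailingBlock {M : ℕ} (m : Fin M) (Q : Matrix (Fin M) (Fin M) ℂ) :
    Matrix (Fin M) (Fin M) ℂ :=
  Matrix.of fun i j => if m ≤ i ∧ m ≤ j then Q i j else 0

lemma trace_mul_psd_re_nonneg {n : ℕ} {A B : Matrix (Fin n) (Fin n) ℂ}
    (hA : A.PosSemidef) (hB : B.PosSemidef) : 0 ≤ ((A * B).trace).re := by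
  open scoped MatrixOrder in obtain ⟨C, rfl⟩ := CStarAlgebra.nonneg_iff_eq_star_mul_self.mp hA.nonneg
  rw [Matrix.mul_assoc, Matrix.trace_mul_comm]
  have hP : (C * B * Cᴴ).PosSemidef := hB.mul_mul_conjTranspose_same C
  rw [Matrix.trace, Complex.re_sum]
  apply Finset.sum_nonneg
  intro i _
  have := (Matrix.posSemidef_iff_dotProduct_mulVec.mp hP).2 (Pi.single i 1)
  rw [Complex.le_def] at this
  simpa [Matrix.diag, Matrix.mulVec_single, dotProduct, Pi.single_apply, Matrix.star_eq_conjTranspose] using this.1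

lemma trace_mul_vecMulVec {n : ℕ} (A : Matrix (Fin n) (Fin n) ℂ) (x : Fin n → ℂ) :
    (Matrix.vecMulVec x (star x) * A).trace = star x ⬝ᵥ (A *ᵥ x) := by
  simp [Matrix.trace, Matrix.diag, Matrix.mul_apply, Matrix.vecMulVec_apply, dotProduct,
    Matrix.mulVec, Finset.mul_sum]
  rw [Finset.sum_comm]
  refine Finset.sum_congr rfl fun i _ => Finset.sum_congr rfl fun j _ => ?_
  ring_nf

lemma trace_stdBasis_mul {n : ℕ} (A : Matrix (Fin n) (Fin n) ℂ) (m : Fin n) :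
    (Matrix.single m m (1 : ℂ) * A).trace = A m m := by
  simp [Matrix.trace, Matrix.diag, Matrix.mul_apply, Matrix.single, ite_and]

lemma trace_mul_trailing {n : ℕ} (A B : Matrix (Fin n) (Fin n) ℂ) (m : Fin n) :
    (A * trailingBlock m B).trace = (trailingBlock m A * B).trace := by
  simp only [Matrix.trace, Matrix.diag, Matrix.mul_apply, trailingBlock, Matrix.of_apply,
    mul_ite, ite_mul, mul_zero, zero_mul]
  refine Finset.sum_congr rfl fun i _ => Finset.sum_congr rfl fun j _ => ?_
  by_cases h1 : m ≤ i <;> by_cases h2 : m ≤ j <;> simp [h1, h2, mul_comm]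

lemma sum_identity {K M : ℕ} (β σ2 g q tV : Fin K → ℂ) (x : Fin K → Fin K → ℂ)
    (l uQ η u : Fin M → ℂ) (dV : Fin K → Fin M → ℂ) (tQ : ℂ) :
    (∑ k, β k * (g k * x k k - (∑ j ∈ Finset.univ.erase k, x k j) - q k - σ2 k))
    + (∑ m, (η m * u m - ((∑ k, dV k m) + uQ m) * l m))
    + (∑ k, (tV k + (∑ j ∈ Finset.univ.erase k, β j * x j k) + (∑ m, l m * dV k m)
        - β k * g k * x k k))
    + (tQ + (∑ k, β k * q k) + (∑ m, l m * uQ m) - ∑ m, η m * u m)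
    = (∑ k, tV k) + tQ - ∑ k, β k * σ2 k := by
  simp only [Finset.sum_erase_eq_sub (Finset.mem_univ _)]
  have swap1 : ∑ k, ∑ j, β j * x j k = ∑ k, ∑ j, β k * x k j := Finset.sum_comm
  have swap2 : ∑ m, (∑ k, dV k m) * l m = ∑ k, ∑ m, l m * dV k m := by
    simp only [Finset.sum_mul]
    rw [Finset.sum_comm]
    exact Finset.sum_congr rfl fun k _ => Finset.sum_congr rfl fun m _ => mul_comm _ _
  simp only [mul_sub, sub_mul, add_mul, Finset.sum_sub_distrib, Finset.sum_add_distrib,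
    Finset.mul_sum]
  have swap3 : ∑ m, l m * uQ m = ∑ m, uQ m * l m :=
    Finset.sum_congr rfl fun _ _ => mul_comm _ _
  rw [swap1, swap2, swap3]
  ring_nf

/-- weak duality between the semidefinite relaxation of the joint beamforming
and compression problem and its Lagrangian dual:
any primal feasible `(V, Q)` and dual feasible `(β, Λ)` satisfy
`Σ_k tr V_k + tr Q ≥ Σ_k β_k σ_k²`. -/
theorem stmt15 (M K : ℕ) (hM : 1 ≤ M) (hK : 1 ≤ K)
    (h : Fin K → Fin M → ℂ)
    (γ : Fin K → ℝ) (hγ : ∀ k, 0 < γ k)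
    (σ : Fin K → ℝ) (hσ : ∀ k, 0 < σ k)
    (η : Fin M → ℝ) (hη : ∀ m, 1 < η m)
    (V : Fin K → Matrix (Fin M) (Fin M) ℂ) (hV : ∀ k, (V k).PosSemidef)
    (Q : Matrix (Fin M) (Fin M) ℂ) (hQ : Q.PosSemidef)
    (ha : ∀ k : Fin K,
      0 ≤ (1 / γ k) * (star (h k) ⬝ᵥ (V k *ᵥ h k)).re
            - ∑ j ∈ Finset.univ.erase k, (star (h k) ⬝ᵥ (V j *ᵥ h k)).re
            - (star (h k) ⬝ᵥ (Q *ᵥ h k)).re - σ k ^ 2)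
    (hB : ∀ m : Fin M,
      ((η m : ℂ) • trailingBlock m Q
        - ((∑ k, V k m m) + Q m m) • Matrix.single m m (1 : ℂ)).PosSemidef)
    (β : Fin K → ℝ) (hβ : ∀ k, 0 ≤ β k)
    (Λ : Fin M → Matrix (Fin M) (Fin M) ℂ) (hΛ : ∀ m, (Λ m).PosSemidef)
    (hC : ∀ k : Fin K,
      ((1 + (∑ j ∈ Finset.univ.erase k, (β j : ℂ) • vecMulVec (h j) (star (h j)))
          + ∑ m, Λ m m m • Matrix.single m m (1 : ℂ))
        - ((β k / γ k : ℝ) : ℂ) • vecMulVec (h k) (star (h k))).PosSemidef)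
    (hD : (1 + (∑ k, (β k : ℂ) • vecMulVec (h k) (star (h k)))
          + (∑ m, Λ m m m • Matrix.single m m (1 : ℂ))
          - ∑ m, (η m : ℂ) • trailingBlock m (Λ m)).PosSemidef) :
    ∑ k, β k * σ k ^ 2 ≤ (∑ k, (V k).trace).re + Q.trace.re := by
  classical
  -- atoms
  set x : Fin K → Fin K → ℂ := fun k j => star (h k) ⬝ᵥ (V j *ᵥ h k) with hxdef
  set q : Fin K → ℂ := fun k => star (h k) ⬝ᵥ (Q *ᵥ h k) with hqdef
  set u : Fin M → ℂ := fun m => (trailingBlock m (Λ m) * Q).trace with hudef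
  -- trace expansions
  have hT2 : ∀ m : Fin M,
      ((Λ m) * ((η m : ℂ) • trailingBlock m Q
        - ((∑ k, V k m m) + Q m m) • Matrix.single m m (1 : ℂ))).trace
      = (η m : ℂ) * u m - ((∑ k, V k m m) + Q m m) * Λ m m m := by
    intro m
    rw [Matrix.mul_sub, Matrix.mul_smul, Matrix.mul_smul, Matrix.trace_sub, Matrix.trace_smul,
      Matrix.trace_smul, trace_mul_trailing, Matrix.trace_mul_comm (Λ m), trace_stdBasis_mul]
    simp [smul_eq_mul, hudef]
  have hT3 : ∀ k : Fin K,
      (((1 + (∑ j ∈ Finset.univ.erase k, (β j : ℂ) • vecMulVec (h j) (star (h j)))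
          + ∑ m, Λ m m m • Matrix.single m m (1 : ℂ))
        - ((β k / γ k : ℝ) : ℂ) • vecMulVec (h k) (star (h k))) * V k).trace
      = (V k).trace + (∑ j ∈ Finset.univ.erase k, (β j : ℂ) * x j k)
        + (∑ m, Λ m m m * V k m m)
        - (β k : ℂ) * ((1 / γ k : ℝ) : ℂ) * x k k := by
    intro k
    simp only [Matrix.sub_mul, Matrix.add_mul, Matrix.one_mul, Matrix.sum_mul, Matrix.smul_mul,
      Matrix.trace_sub, Matrix.trace_add, Matrix.trace_sum, Matrix.trace_smul, smul_eq_mul,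
      trace_mul_vecMulVec, trace_stdBasis_mul, hxdef]
    push_cast
    ring
  have hT4 :
      ((1 + (∑ k, (β k : ℂ) • vecMulVec (h k) (star (h k)))
          + (∑ m, Λ m m m • Matrix.single m m (1 : ℂ))
          - ∑ m, (η m : ℂ) • trailingBlock m (Λ m)) * Q).trace
      = Q.trace + (∑ k, (β k : ℂ) * q k) + (∑ m, Λ m m m * Q m m)
        - ∑ m, (η m : ℂ) * u m := by
    simp only [Matrix.sub_mul, Matrix.add_mul, Matrix.one_mul, Matrix.sum_mul, Matrix.smul_mul,
      Matrix.trace_sub, Matrix.trace_add, Matrix.trace_sum, Matrix.trace_smul, smul_eq_mul,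
      trace_mul_vecMulVec, trace_stdBasis_mul, hqdef, hudef]
  -- the complex Lagrangian identity
  have E : (∑ k, (β k : ℂ) * (((1 / γ k : ℝ) : ℂ) * x k k
        - (∑ j ∈ Finset.univ.erase k, x k j) - q k - ((σ k ^ 2 : ℝ) : ℂ)))
      + (∑ m, ((Λ m) * ((η m : ℂ) • trailingBlock m Q
          - ((∑ k, V k m m) + Q m m) • Matrix.single m m (1 : ℂ))).trace)
      + (∑ k, (((1 + (∑ j ∈ Finset.univ.erase k, (β j : ℂ) • vecMulVec (h j) (star (h j)))
          + ∑ m, Λ m m m • Matrix.single m m (1 : ℂ))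
        - ((β k / γ k : ℝ) : ℂ) • vecMulVec (h k) (star (h k))) * V k).trace)
      + ((1 + (∑ k, (β k : ℂ) • vecMulVec (h k) (star (h k)))
          + (∑ m, Λ m m m • Matrix.single m m (1 : ℂ))
          - ∑ m, (η m : ℂ) • trailingBlock m (Λ m)) * Q).trace
      = (∑ k, (V k).trace) + Q.trace - ∑ k, ((β k : ℂ) * ((σ k ^ 2 : ℝ) : ℂ)) := by
    rw [hT4, Finset.sum_congr rfl fun m _ => hT2 m, Finset.sum_congr rfl fun k _ => hT3 k]
    exact sum_identity (fun k => (β k : ℂ)) (fun k => ((σ k ^ 2 : ℝ) : ℂ))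
      (fun k => ((1 / γ k : ℝ) : ℂ)) q (fun k => (V k).trace) x
      (fun m => Λ m m m) (fun m => Q m m) (fun m => (η m : ℂ)) u
      (fun k m => V k m m) Q.trace
  -- take real parts
  have Ere := congrArg Complex.re E
  simp only [Complex.add_re, Complex.sub_re, Complex.re_sum] at Ere
  have h1 : ∀ k : Fin K, 0 ≤ ((β k : ℂ) * (((1 / γ k : ℝ) : ℂ) * x k k
      - (∑ j ∈ Finset.univ.erase k, x k j) - q k - ((σ k ^ 2 : ℝ) : ℂ))).re := by
    intro k
    have hre : ((((1 / γ k : ℝ) : ℂ) * x k k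
        - (∑ j ∈ Finset.univ.erase k, x k j) - q k - ((σ k ^ 2 : ℝ) : ℂ))).re
        = (1 / γ k) * (x k k).re - (∑ j ∈ Finset.univ.erase k, (x k j).re)
          - (q k).re - σ k ^ 2 := by
      simp [Complex.sub_re, Complex.re_sum, Complex.mul_re, pow_two]
    rw [show ((β k : ℂ) * _).re = β k * ((((1 / γ k : ℝ) : ℂ) * x k k
        - (∑ j ∈ Finset.univ.erase k, x k j) - q k - ((σ k ^ 2 : ℝ) : ℂ))).re from by
      simp [Complex.mul_re], hre]
    exact mul_nonneg (hβ k) (ha k)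
  have h2 : ∀ m : Fin M, 0 ≤ (((Λ m) * ((η m : ℂ) • trailingBlock m Q
      - ((∑ k, V k m m) + Q m m) • Matrix.single m m (1 : ℂ))).trace).re :=
    fun m => trace_mul_psd_re_nonneg (hΛ m) (hB m)
  have h3 : ∀ k : Fin K, 0 ≤ ((((1 + (∑ j ∈ Finset.univ.erase k,
        (β j : ℂ) • vecMulVec (h j) (star (h j)))
          + ∑ m, Λ m m m • Matrix.single m m (1 : ℂ))
        - ((β k / γ k : ℝ) : ℂ) • vecMulVec (h k) (star (h k))) * V k).trace).re :=
    fun k => trace_mul_psd_re_nonneg (hC k) (hV k)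
  have h4 : 0 ≤ (((1 + (∑ k, (β k : ℂ) • vecMulVec (h k) (star (h k)))
          + (∑ m, Λ m m m • Matrix.single m m (1 : ℂ))
          - ∑ m, (η m : ℂ) • trailingBlock m (Λ m)) * Q).trace).re :=
    trace_mul_psd_re_nonneg hD hQ
  have hs1 := Finset.sum_nonneg (fun k (_ : k ∈ Finset.univ) => h1 k)
  have hs2 := Finset.sum_nonneg (fun m (_ : m ∈ Finset.univ) => h2 m)
  have hs3 := Finset.sum_nonneg (fun k (_ : k ∈ Finset.univ) => h3 k)
  have hlast : ∑ k, ((β k : ℂ) * ((σ k ^ 2 : ℝ) : ℂ)).re = ∑ k, β k * σ k ^ 2 := by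
    apply Finset.sum_congr rfl
    intro k _
    rw [← Complex.ofReal_mul, Complex.ofReal_re]
  rw [hlast] at Ere
  rw [Complex.re_sum]
  linarith
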